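/- Let f : [0,∞) → ℝ be non-decreasing, concave with f(0) = 0, and F(M) = ∑_{i=1}^p f(λ_i(M)) for p×p PSD matrices. Let M be a d×d positive semidefinite matrix and Q ∈ ℝ^{d×p} with orthonormal columns (p ≤ d) such that the column space (image) of M is contained in the image of Q. Then ∑_{i=1}^d f(λ_i(M)) ≤ ∑_{i=1}^p f((Qᵀ M Q)_{ii}). -/

import Mathlib

open Matrix BigOperators

theorem stmt3 {d p : ℕ} (hp : p ≤ d) (f : ℝ → ℝ)
    (hmono : MonotoneOn f (Set.Ici 0)) (hconc : ConcaveOn ℝ (Set.Ici 0) f)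
    (hf0 : f 0 = 0)
    (M : Matrix (Fin d) (Fin d) ℝ) (hM : M.PosSemidef)
    (Q : Matrix (Fin d) (Fin p) ℝ) (hQ : Qᵀ * Q = 1)
    (hrange : LinearMap.range M.mulVecLin ≤ LinearMap.range Q.mulVecLin) :
    ∑ i, f (hM.1.eigenvalues i) ≤ ∑ i : Fin p, f ((Qᵀ * M * Q) i i) := by
  set U : Matrix (Fin d) (Fin d) ℝ := (hM.1.eigenvectorUnitary : Matrix (Fin d) (Fin d) ℝ) with hUdef
  set lam : Fin d → ℝ := hM.1.eigenvalues with hlam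
  have hlam0 : ∀ j, 0 ≤ lam j := fun j => hM.eigenvalues_nonneg j
  have hstar : star U = Uᵀ := by
    rw [Matrix.star_eq_conjTranspose, Matrix.conjTranspose_eq_transpose_of_trivial]
  have hUUt : U * Uᵀ = 1 := by
    rw [← hstar]; exact (Matrix.mem_unitaryGroup_iff).mp (hM.1.eigenvectorUnitary).2
  have hUtU : Uᵀ * U = 1 := by
    rw [← hstar]; exact (Matrix.mem_unitaryGroup_iff').mp (hM.1.eigenvectorUnitary).2
  have hspec : M = U * Matrix.diagonal lam * Uᵀ := by
    rw [← hstar]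
    simpa using hM.1.spectral_theorem
  set A : Matrix (Fin p) (Fin d) ℝ := Qᵀ * U with hA
  -- diagonal entries of QᵀMQ
  have hdiag : ∀ i, (Qᵀ * M * Q) i i = ∑ j, (A i j)^2 * lam j := by
    intro i
    have : Qᵀ * M * Q = A * Matrix.diagonal lam * Aᵀ := by
      rw [hspec, hA]
      simp only [Matrix.transpose_mul, Matrix.transpose_transpose]
      simp only [Matrix.mul_assoc]
    rw [this, Matrix.mul_apply]
    congr 1; ext j
    rw [Matrix.mul_diagonal, Matrix.transpose_apply]
    ring
  -- row sums of A squared equal 1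
  have hrow : ∀ i, ∑ j, (A i j)^2 = 1 := by
    intro i
    have h1 : A * Aᵀ = 1 := by
      rw [hA, Matrix.transpose_mul, Matrix.transpose_transpose, Matrix.mul_assoc,
        ← Matrix.mul_assoc U, hUUt, Matrix.one_mul, hQ]
    have := congrFun (congrFun h1 i) i
    rw [Matrix.mul_apply] at this
    simpa [pow_two] using this
  -- column sums: equal 1 when eigenvalue nonzero
  have hcol : ∀ j, lam j ≠ 0 → ∑ i, (A i j)^2 = 1 := by
    intro j hj
    set v : Fin d → ℝ := fun k => U k j with hv
    have hAv : ∀ i, A i j = (Qᵀ *ᵥ v) i := by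
      intro i
      rw [hA, Matrix.mul_apply, Matrix.mulVec]
      rfl
    have hMv : M *ᵥ v = lam j • v := by
      have := hM.1.mulVec_eigenvectorBasis j
      convert this using 2 <;> rfl
    have hvrange : v ∈ LinearMap.range M.mulVecLin := by
      refine ⟨(lam j)⁻¹ • v, ?_⟩
      simp [Matrix.mulVecLin_apply, Matrix.mulVec_smul, hMv, smul_smul, inv_mul_cancel₀ hj]
    obtain ⟨x, hx⟩ := hrange hvrange
    rw [Matrix.mulVecLin_apply] at hx
    have hQtv : Qᵀ *ᵥ v = x := by
      rw [← hx, Matrix.mulVec_mulVec, hQ, Matrix.one_mulVec]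
    have hvv : v ⬝ᵥ v = 1 := by
      have := congrFun (congrFun hUtU j) j
      rw [Matrix.mul_apply] at this
      simpa [dotProduct, hv, mul_comm] using this
    have hxx : x ⬝ᵥ x = 1 := by
      rw [← hvv, ← hx]
      rw [dotProduct_comm, Matrix.dotProduct_mulVec, ← Matrix.mulVec_transpose, Matrix.mulVec_mulVec, hQ, Matrix.one_mulVec]
    calc ∑ i, (A i j)^2 = x ⬝ᵥ x := by
          simp only [hAv, hQtv, dotProduct, pow_two]
      _ = 1 := hxx
  -- the main chain
  have key : ∀ j, f (lam j) = ∑ i : Fin p, (A i j)^2 * f (lam j) := by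
    intro j
    rw [← Finset.sum_mul]
    by_cases hj : lam j = 0
    · rw [hj, hf0, mul_zero]
    · rw [hcol j hj, one_mul]
  calc ∑ j, f (lam j) = ∑ j, ∑ i : Fin p, (A i j)^2 * f (lam j) := by
        exact Finset.sum_congr rfl fun j _ => key j
    _ = ∑ i : Fin p, ∑ j, (A i j)^2 * f (lam j) := Finset.sum_comm
    _ ≤ ∑ i : Fin p, f (∑ j, (A i j)^2 * lam j) := by
        refine Finset.sum_le_sum fun i _ => ?_
        have := hconc.le_map_sum (t := Finset.univ) (w := fun j => (A i j)^2)
          (p := lam) (fun j _ => sq_nonneg _) (hrow i) (fun j _ => hlam0 j)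
        simpa [smul_eq_mul] using this
    _ = ∑ i : Fin p, f ((Qᵀ * M * Q) i i) := by
        refine Finset.sum_congr rfl fun i _ => ?_
        rw [hdiag]
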